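/- If a graph G is bipartite, then there exists no probability measure μ with full support on V satisfying μ(I) < μ(E(I)) for every independent set I of G; conversely, if G is non-bipartite and connected, such a measure exists. -/

import Mathlib

open Finset

/-- The stability condition `Ncond`: a full-support probability vector `μ` on the
vertices such that `μ(I) < μ(E(I))` for every independent set `I`. -/
def NcondMeasure {V : Type*} [Fintype V] (G : SimpleGraph V) [DecidableRel G.Adj]
    (μ : V → ℝ) : Prop :=
  (∀ v, 0 < μ v) ∧ (∑ v, μ v = 1) ∧
    ∀ I : Finset V, I.Nonempty → (∀ a ∈ I, ∀ b ∈ I, ¬ G.Adj a b) →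
      ∑ i ∈ I, μ i < ∑ v ∈ Finset.univ.filter (fun v => ∃ u ∈ I, G.Adj u v), μ v

private lemma walk_closed {V : Type*} (G : SimpleGraph V) (P : V → Prop)
    (hP : ∀ u v, P u → G.Adj u v → P v) :
    ∀ {u v : V}, G.Walk u v → P u → P v := by
  intro u v w
  induction w with
  | nil => exact id
  | cons h p ih => intro hu; exact ih (hP _ _ hu h)

private lemma deg_count {V : Type*} [Fintype V] [DecidableEq V] (G : SimpleGraph V)
    [DecidableRel G.Adj] (s : Finset V) :
    ∑ v ∈ s, (G.neighborFinset v).card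
      = ((s ×ˢ univ).filter fun p : V × V => G.Adj p.1 p.2).card := by
  rw [Finset.card_filter, Finset.sum_product]
  refine Finset.sum_congr rfl fun u _ => ?_
  rw [SimpleGraph.neighborFinset_eq_filter, Finset.card_filter]

private lemma deg_sum_lt {V : Type*} [Fintype V] [DecidableEq V] (G : SimpleGraph V)
    [DecidableRel G.Adj] (hconn : G.Connected) (hncol : ¬ G.Colorable 2)
    (I : Finset V) (hne : I.Nonempty) (hind : ∀ a ∈ I, ∀ b ∈ I, ¬ G.Adj a b) :
    ∑ v ∈ I, (G.neighborFinset v).card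
      < ∑ v ∈ univ.filter (fun v => ∃ u ∈ I, G.Adj u v), (G.neighborFinset v).card := by
  set N : Finset V := univ.filter (fun v => ∃ u ∈ I, G.Adj u v) with hN
  have hmemN : ∀ {v : V}, v ∈ N ↔ ∃ u ∈ I, G.Adj u v := by
    intro v; simp [hN]
  -- a witness edge leaving N towards outside I
  have hwit : ∃ v ∈ N, ∃ x, G.Adj v x ∧ x ∉ I := by
    by_contra hcon
    push_neg at hcon
    apply hncol
    -- every vertex is in I or N
    have hstep : ∀ u v, (u ∈ I ∨ u ∈ N) → G.Adj u v → (v ∈ I ∨ v ∈ N) := by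
      intro u v hu hadj
      rcases hu with hu | hu
      · exact Or.inr (hmemN.mpr ⟨u, hu, hadj⟩)
      · exact Or.inl (hcon u hu v hadj)
    have hall : ∀ v, v ∈ I ∨ v ∈ N := by
      intro v
      obtain ⟨u0, hu0⟩ := hne
      exact walk_closed G _ hstep ((hconn.preconnected u0 v).some) (Or.inl hu0)
    have hdisj : ∀ v, v ∈ I → v ∉ N := by
      intro v hv hvN
      obtain ⟨u, hu, hadj⟩ := hmemN.mp hvN
      exact hind u hu v hv hadj
    refine ⟨⟨fun v => if v ∈ I then 0 else 1, ?_⟩⟩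
    intro a b hadj
    by_cases ha : a ∈ I <;> by_cases hb : b ∈ I <;> simp [ha, hb]
    · exact hind a ha b hb hadj
    · -- a ∉ I, b ∉ I : both in N, contradiction
      exfalso
      have haN : a ∈ N := (hall a).resolve_left ha
      exact hb (hcon a haN b hadj)
  obtain ⟨v0, hv0N, x0, hadj0, hx0⟩ := hwit
  rw [deg_count, deg_count]
  set A : Finset (V × V) := (I ×ˢ univ).filter fun p : V × V => G.Adj p.1 p.2 with hA
  set B : Finset (V × V) := (N ×ˢ univ).filter fun p : V × V => G.Adj p.1 p.2 with hB
  have hsub : A.image Prod.swap ⊆ B := by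
    intro p hp
    obtain ⟨q, hq, rfl⟩ := Finset.mem_image.mp hp
    rw [hA, Finset.mem_filter, Finset.mem_product] at hq
    rw [hB, Finset.mem_filter, Finset.mem_product]
    exact ⟨⟨hmemN.mpr ⟨q.1, hq.1.1, hq.2⟩, Finset.mem_univ _⟩, hq.2.symm⟩
  have hss : A.image Prod.swap ⊂ B := by
    refine Finset.ssubset_iff_of_subset hsub |>.mpr ⟨(v0, x0), ?_, ?_⟩
    · rw [hB, Finset.mem_filter, Finset.mem_product]
      exact ⟨⟨hv0N, Finset.mem_univ _⟩, hadj0⟩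
    · intro hmem
      obtain ⟨q, hq, hqe⟩ := Finset.mem_image.mp hmem
      rw [hA, Finset.mem_filter, Finset.mem_product] at hq
      apply hx0
      have : q.2 = v0 ∧ q.1 = x0 := by
        constructor <;> [exact congrArg Prod.fst hqe; exact congrArg Prod.snd hqe]
      rw [← this.2]; exact hq.1.1
  calc A.card = (A.image Prod.swap).card :=
        (Finset.card_image_of_injective _ Prod.swap_injective).symm
    _ < B.card := Finset.card_lt_card hss

/-- If `G` is bipartite there is no full-support probability measure satisfying the
natural condition `μ(I) < μ(E(I))` for all independent sets `I`; conversely if `G`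
is connected and non-bipartite such a measure exists. -/
theorem Ncond_nonempty_iff_nonbipartite {V : Type*} [Fintype V] [DecidableEq V]
    (G : SimpleGraph V) [DecidableRel G.Adj] :
    (G.Colorable 2 → ¬ ∃ μ : V → ℝ, NcondMeasure G μ) ∧
    (G.Connected → ¬ G.Colorable 2 → ∃ μ : V → ℝ, NcondMeasure G μ) := by
  constructor
  · -- bipartite : no measure
    rintro hcol ⟨μ, hpos, hsum, hI⟩
    obtain ⟨C⟩ := hcol
    have h2 : ∀ x : Fin 2, x = 0 ∨ x = 1 := by decide
    set A : Finset V := univ.filter fun v => C v = 0 with hAdef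
    set B : Finset V := univ.filter fun v => C v = 1 with hBdef
    have hmemA : ∀ {v}, v ∈ A ↔ C v = 0 := by intro v; simp [hAdef]
    have hmemB : ∀ {v}, v ∈ B ↔ C v = 1 := by intro v; simp [hBdef]
    have hindA : ∀ a ∈ A, ∀ b ∈ A, ¬ G.Adj a b := by
      intro a ha b hb hadj
      exact C.valid hadj (by rw [hmemA.mp ha, hmemA.mp hb])
    have hindB : ∀ a ∈ B, ∀ b ∈ B, ¬ G.Adj a b := by
      intro a ha b hb hadj
      exact C.valid hadj (by rw [hmemB.mp ha, hmemB.mp hb])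
    have hNA : univ.filter (fun v => ∃ u ∈ A, G.Adj u v) ⊆ B := by
      intro v hv
      rw [Finset.mem_filter] at hv
      obtain ⟨u, hu, hadj⟩ := hv.2
      refine hmemB.mpr ?_
      rcases h2 (C v) with h | h
      · exact absurd (by rw [hmemA.mp hu, h]) (C.valid hadj)
      · exact h
    have hNB : univ.filter (fun v => ∃ u ∈ B, G.Adj u v) ⊆ A := by
      intro v hv
      rw [Finset.mem_filter] at hv
      obtain ⟨u, hu, hadj⟩ := hv.2
      refine hmemA.mpr ?_
      rcases h2 (C v) with h | h
      · exact h
      · exact absurd (by rw [hmemB.mp hu, h]) (C.valid hadj)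
    have hA : A.Nonempty → ∑ v ∈ A, μ v < ∑ v ∈ B, μ v := fun h =>
      lt_of_lt_of_le (hI A h hindA)
        (Finset.sum_le_sum_of_subset_of_nonneg hNA fun i _ _ => (hpos i).le)
    have hB : B.Nonempty → ∑ v ∈ B, μ v < ∑ v ∈ A, μ v := fun h =>
      lt_of_lt_of_le (hI B h hindB)
        (Finset.sum_le_sum_of_subset_of_nonneg hNB fun i _ _ => (hpos i).le)
    have hAB : ∑ v ∈ A, μ v + ∑ v ∈ B, μ v = 1 := by
      rw [← hsum]
      have : B = univ.filter fun v => ¬ (C v = 0) := by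
        ext v
        simp only [hBdef, Finset.mem_filter, Finset.mem_univ, true_and]
        rcases h2 (C v) with h | h <;> simp [h]
      rw [this, hAdef]
      exact Finset.sum_filter_add_sum_filter_not _ _ _
    rcases A.eq_empty_or_nonempty with hAe | hAne
    · have hsA : ∑ v ∈ A, μ v = 0 := by rw [hAe]; exact Finset.sum_empty
      have hBne : B.Nonempty := by
        rcases B.eq_empty_or_nonempty with hBe | h
        · rw [hAe, hBe] at hAB; simp at hAB
        · exact h
      linarith [hB hBne]
    rcases B.eq_empty_or_nonempty with hBe | hBne
    · have hsB : ∑ v ∈ B, μ v = 0 := by rw [hBe]; exact Finset.sum_empty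
      linarith [hA hAne]
    linarith [hA hAne, hB hBne]
  · -- connected non-bipartite : construct the measure
    intro hconn hncol
    have hVne : Nonempty V := by
      by_contra h
      exact hncol ⟨⟨fun v => (h ⟨v⟩).elim, fun {a b} _ => (h ⟨a⟩).elim⟩⟩
    have hdeg : ∀ v, 0 < (G.neighborFinset v).card := by
      intro v
      rcases Nat.eq_zero_or_pos (G.neighborFinset v).card with h0 | h
      · exfalso
        have hempty : G.neighborFinset v = ∅ := Finset.card_eq_zero.mp h0
        have hall : ∀ u, u = v := by
          intro u
          have w := (hconn.preconnected v u).some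
          cases w with
          | nil => rfl
          | cons h p =>
            exfalso
            rw [Finset.eq_empty_iff_forall_notMem] at hempty
            exact hempty _ ((G.mem_neighborFinset v _).mpr h)
        apply hncol
        refine ⟨⟨fun _ => 0, ?_⟩⟩
        intro a b hadj
        exfalso
        rw [hall a, hall b] at hadj
        exact G.loopless.irrefl v hadj
      · exact h
    set D : ℝ := ∑ v, ((G.neighborFinset v).card : ℝ) with hD
    have hDpos : 0 < D := by
      rw [hD]
      apply Finset.sum_pos
      · intro i _; exact_mod_cast hdeg i
      · exact Finset.univ_nonempty
    refine ⟨fun v => ((G.neighborFinset v).card : ℝ) / D, ?_, ?_, ?_⟩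
    · intro v
      exact div_pos (by exact_mod_cast hdeg v) hDpos
    · rw [← Finset.sum_div, ← hD, div_self hDpos.ne']
    · intro I hne hind
      rw [← Finset.sum_div, ← Finset.sum_div]
      rw [div_lt_div_iff_of_pos_right hDpos]
      have := deg_sum_lt G hconn hncol I hne hind
      exact_mod_cast this
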